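/- For a free group F of rank n > 2 and every k ∈ ℕ, there exists a primitive element of F that is not a product of at most k palindromes. In particular, if z, x, y are distinct basis elements and w is a word in x, y that is not a product of k palindromes in F(x,y), then zw is a primitive element of F that is not a product of k palindromes. -/

import Mathlib

/-- `w` is a palindrome w.r.t. the basis `X`: its reduced word equals its reverse. -/
def IsPalindrome {X : Type*} [DecidableEq X] (w : FreeGroup X) : Prop :=
  w.toWord.reverse = w.toWord

/-- `w` is a primitive element: a member of some basis, i.e. the image of a basis
element under some automorphism. -/
def IsPrimitive {X : Type*} (w : FreeGroup X) : Prop :=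
  ∃ (φ : FreeGroup X ≃* FreeGroup X) (x : X), φ (FreeGroup.of x) = w

/-- `w` is a product of at most `k` elements of `S`. -/
def IsProductOfAtMost {G : Type*} [Monoid G] (S : Set G) (k : ℕ) (w : G) : Prop :=
  ∃ l : List G, l.length ≤ k ∧ (∀ x ∈ l, x ∈ S) ∧ l.prod = w

namespace PalAux

open FreeGroup

variable {α : Type*} [DecidableEq α]

/-- Non-cancellation relation between adjacent letters. -/
def Rn (p q : α × Bool) : Prop := ¬(p.1 = q.1 ∧ p.2 = !q.2)

instance (p q : α × Bool) : Decidable (Rn p q) := by unfold Rn; infer_instance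

theorem chain'_reduce (l : List (α × Bool)) : List.Chain' Rn (FreeGroup.reduce l) := by
  induction l with
  | nil => exact List.isChain_nil
  | cons p t ih =>
    rw [FreeGroup.reduce.cons]
    rcases h : FreeGroup.reduce t with _ | ⟨q, r⟩
    · exact List.isChain_singleton _
    · rw [h] at ih
      show List.Chain' Rn (if p.1 = q.1 ∧ p.2 = !q.2 then r else p :: q :: r)
      split_ifs with hc
      · exact ih.tail
      · exact List.isChain_cons_cons.mpr ⟨hc, ih⟩

theorem reduce_eq_self {l : List (α × Bool)} (h : List.Chain' Rn l) :
    FreeGroup.reduce l = l := by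
  induction l with
  | nil => rfl
  | cons p t ih =>
    rw [FreeGroup.reduce.cons, ih h.tail]
    cases t with
    | nil => rfl
    | cons q r =>
      show (if p.1 = q.1 ∧ p.2 = !q.2 then r else p :: q :: r) = p :: q :: r
      exact if_neg (List.isChain_cons_cons.mp h).1

theorem chain'_toWord (w : FreeGroup α) : List.Chain' Rn w.toWord := by
  rw [← FreeGroup.reduce_toWord]; exact chain'_reduce _

theorem decomp (l2 : List (α × Bool)) : ∀ l1 : List (α × Bool),
    List.Chain' Rn l1 → List.Chain' Rn l2 →
    ∃ p c s, l1 = p ++ c ∧ l2 = FreeGroup.invRev c ++ s ∧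
      FreeGroup.reduce (l1 ++ l2) = p ++ s := by
  induction l2 with
  | nil =>
    intro l1 h1 _
    exact ⟨l1, [], [], by simp, by simp [FreeGroup.invRev], by simpa using reduce_eq_self h1⟩
  | cons v l2' IH =>
    intro l1 h1 h2
    rcases List.eq_nil_or_concat l1 with rfl | ⟨l1', u, rfl⟩
    · exact ⟨[], [], v :: l2', rfl, by simp [FreeGroup.invRev], by simpa using reduce_eq_self h2⟩
    rw [List.concat_eq_append] at h1 ⊢
    by_cases hc : u.1 = v.1 ∧ u.2 = !v.2
    · obtain ⟨p, c, s, e1, e2, e3⟩ := IH l1' (h1.prefix ⟨[u], rfl⟩) h2.tail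
      have hv : v = (u.1, !u.2) := by
        obtain ⟨a, b⟩ := u; obtain ⟨a', b'⟩ := v
        obtain ⟨h1', h2'⟩ := hc
        simp only at h1' h2'
        subst h1'; cases b' <;> simp_all
      refine ⟨p, c ++ [u], s, by rw [e1, List.append_assoc], ?_, ?_⟩
      · rw [hv, e2]; simp [FreeGroup.invRev]
      · have hst : FreeGroup.Red.Step ((l1' ++ [u]) ++ v :: l2') (l1' ++ l2') := by
          rw [hv, List.append_assoc]
          exact FreeGroup.Red.Step.not
        rw [FreeGroup.reduce.Step.eq hst, e3]
    · refine ⟨l1' ++ [u], [], v :: l2', by simp, by simp [FreeGroup.invRev], ?_⟩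
      apply reduce_eq_self
      apply h1.append h2
      intro a ha b hb
      rw [Option.mem_def, List.getLast?_concat] at ha
      rw [Option.mem_def, List.head?_cons, Option.some.injEq] at hb
      cases ha; subst hb; exact hc

/-- Weight of an adjacent pair of letters in `FreeGroup Bool`:
counts `x y` and `x⁻¹ y⁻¹` positively, their reverses negatively. -/
def wt : Bool × Bool → Bool × Bool → ℤ
  | (false, true), (true, true) => 1
  | (false, false), (true, false) => 1
  | (true, true), (false, true) => -1
  | (true, false), (false, false) => -1
  | _, _ => 0

theorem wt_swap : ∀ p q, wt q p = -wt p q := by decide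
theorem wt_inv : ∀ p q, wt (p.1, !p.2) (q.1, !q.2) = wt p q := by decide
theorem wt_abs : ∀ p q, |wt p q| ≤ 1 := by decide

/-- Sum of weights of adjacent pairs. -/
def fw : List (Bool × Bool) → ℤ
  | [] => 0
  | [_] => 0
  | p :: q :: t => wt p q + fw (q :: t)

/-- Junction term. -/
def hw (l1 l2 : List (Bool × Bool)) : ℤ :=
  match l1.getLast?, l2.head? with
  | some p, some q => wt p q
  | _, _ => 0

theorem hw_abs (l1 l2 : List (Bool × Bool)) : |hw l1 l2| ≤ 1 := by
  unfold hw
  rcases l1.getLast? with _ | p <;> rcases l2.head? with _ | q <;> simp [wt_abs]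

theorem hw_single (p : Bool × Bool) (q : Bool × Bool) (t : List (Bool × Bool)) :
    hw [p] (q :: t) = wt p q := rfl

theorem fw_append (l1 l2 : List (Bool × Bool)) :
    fw (l1 ++ l2) = fw l1 + fw l2 + hw l1 l2 := by
  induction l1 with
  | nil => simp [fw, hw]
  | cons p t ih =>
    cases t with
    | nil =>
      cases l2 with
      | nil => simp [fw, hw]
      | cons q r => show fw (p :: q :: r) = fw [p] + fw (q :: r) + hw [p] (q :: r)
                    rw [hw_single]; show wt p q + fw (q :: r) = 0 + fw (q :: r) + wt p q
                    ring
    | cons q r =>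
      show wt p q + fw ((q :: r) ++ l2) = (wt p q + fw (q :: r)) + fw l2 + hw (p :: q :: r) l2
      rw [ih]
      have : hw (p :: q :: r) l2 = hw (q :: r) l2 := by
        unfold hw; rw [List.getLast?_cons_cons]
      rw [this]; ring

theorem fw_reverse (l : List (Bool × Bool)) : fw l.reverse = -fw l := by
  induction l with
  | nil => simp [fw]
  | cons p t ih =>
    cases t with
    | nil => simp [fw]
    | cons q r =>
      rw [List.reverse_cons, fw_append, ih]
      have h1 : fw [p] = 0 := rfl
      have h2 : hw (q :: r).reverse [p] = wt q p := by
        unfold hw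
        rw [List.getLast?_reverse, List.head?_cons, List.head?_cons]
      rw [h1, h2, wt_swap]
      show _ = -(wt p q + fw (q :: r))
      ring

theorem fw_map_inv (l : List (Bool × Bool)) :
    fw (l.map fun g => (g.1, !g.2)) = fw l := by
  induction l with
  | nil => rfl
  | cons p t ih =>
    cases t with
    | nil => rfl
    | cons q r =>
      show wt (p.1, !p.2) (q.1, !q.2) + fw ((q :: r).map fun g => (g.1, !g.2)) =
        wt p q + fw (q :: r)
      rw [wt_inv, ih]

theorem fw_invRev (l : List (Bool × Bool)) : fw (FreeGroup.invRev l) = -fw l := by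
  rw [FreeGroup.invRev, fw_reverse, fw_map_inv]

/-- The quasimorphism on `FreeGroup Bool`. -/
def fq (w : FreeGroup Bool) : ℤ := fw w.toWord

theorem toWord_mul (u v : FreeGroup Bool) :
    (u * v).toWord = FreeGroup.reduce (u.toWord ++ v.toWord) := by
  conv_lhs => rw [← FreeGroup.mk_toWord (x := u), ← FreeGroup.mk_toWord (x := v)]
  rw [FreeGroup.mul_mk, FreeGroup.toWord_mk]

theorem fq_mul_bound (u v : FreeGroup Bool) : |fq (u * v) - fq u - fq v| ≤ 3 := by
  obtain ⟨p, c, s, e1, e2, e3⟩ := decomp v.toWord u.toWord (chain'_toWord u) (chain'_toWord v)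
  have h1 : fq (u * v) = fw p + fw s + hw p s := by
    rw [fq, toWord_mul, e3, fw_append]
  have h2 : fq u = fw p + fw c + hw p c := by rw [fq, e1, fw_append]
  have h3 : fq v = -fw c + fw s + hw (FreeGroup.invRev c) s := by
    rw [fq, e2, fw_append, fw_invRev]
  have b1 := abs_le.mp (hw_abs p s)
  have b2 := abs_le.mp (hw_abs p c)
  have b3 := abs_le.mp (hw_abs (FreeGroup.invRev c) s)
  rw [h1, h2, h3, abs_le]
  constructor <;> linarith [b1.1, b1.2, b2.1, b2.2, b3.1, b3.2]

theorem fq_palindrome {p : FreeGroup Bool} (h : IsPalindrome p) : fq p = 0 := by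
  have h2 : fw p.toWord = -fw p.toWord := by
    conv_lhs => rw [← h]
    rw [fw_reverse]
  rw [fq]
  omega

theorem fq_prod (l : List (FreeGroup Bool)) (h : ∀ p ∈ l, IsPalindrome p) :
    |fq l.prod| ≤ 3 * l.length := by
  induction l with
  | nil => simp [fq, fw, FreeGroup.toWord_one]
  | cons p t ih =>
    have hb := fq_mul_bound p t.prod
    have hp : fq p = 0 := fq_palindrome (h p (List.mem_cons_self (a := p) (l := t)))
    have ht := ih fun q hq => h q (List.mem_cons_of_mem p hq)
    rw [List.prod_cons, List.length_cons]
    have h1 := abs_le.mp hb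
    have h2 := abs_le.mp ht
    rw [abs_le]
    push_cast
    constructor <;> [linarith [h1.1, h2.1]; linarith [h1.2, h2.2]]

theorem not_prod_of_fq {k : ℕ} {w : FreeGroup Bool} (h : 3 * (k : ℤ) < |fq w|) :
    ¬ IsProductOfAtMost {p : FreeGroup Bool | IsPalindrome p} k w := by
  rintro ⟨l, hlen, hmem, rfl⟩
  have := fq_prod l hmem
  have hl : (l.length : ℤ) ≤ (k : ℤ) := by exact_mod_cast hlen
  linarith

/-- The witness word : `([x,y])^n`, as an explicit reduced list. -/
def LL : ℕ → List (Bool × Bool)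
  | 0 => []
  | n + 1 => (false, true) :: (true, true) :: (false, false) :: (true, false) :: LL n

theorem LL_chain (n : ℕ) : List.Chain' Rn (LL n) := by
  induction n with
  | zero => exact List.isChain_nil
  | succ n ih =>
    refine List.isChain_cons_cons.mpr ⟨by decide, List.isChain_cons_cons.mpr ⟨by decide,
      List.isChain_cons_cons.mpr ⟨by decide, ?_⟩⟩⟩
    cases n with
    | zero => exact List.isChain_singleton _
    | succ m => exact List.isChain_cons_cons.mpr ⟨by decide, ih⟩

theorem fw_LL_aux (n : ℕ) : fw ((true, false) :: LL n) = fw (LL n) := by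
  cases n with
  | zero => rfl
  | succ m =>
    show wt (true, false) (false, true) + fw (LL (m + 1)) = fw (LL (m + 1))
    norm_num [wt]

theorem fw_LL (n : ℕ) : fw (LL n) = 2 * n := by
  induction n with
  | zero => rfl
  | succ n ih =>
    show wt (false, true) (true, true) + (wt (true, true) (false, false) +
      (wt (false, false) (true, false) + fw ((true, false) :: LL n))) = 2 * (n + 1 : ℕ)
    rw [fw_LL_aux, ih]
    norm_num [wt]
    push_cast
    ring

theorem big_word (k : ℕ) :
    ¬ IsProductOfAtMost {p : FreeGroup Bool | IsPalindrome p} k (FreeGroup.mk (LL (2 * k + 1))) := by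
  apply not_prod_of_fq
  have : fq (FreeGroup.mk (LL (2 * k + 1))) = 2 * (2 * k + 1 : ℕ) := by
    rw [fq, FreeGroup.toWord_mk, reduce_eq_self (LL_chain _), fw_LL]
  rw [this]
  push_cast
  rw [abs_of_nonneg (by positivity)]
  linarith

/-! ### The "invert all letters" endomorphism and the palindrome characterization -/

/-- The automorphism-like hom sending every generator to its inverse. -/
def sg {α : Type*} : FreeGroup α →* FreeGroup α :=
  FreeGroup.lift fun t => (FreeGroup.of t)⁻¹

theorem sg_of (a : α) : sg (FreeGroup.of a) = (FreeGroup.of a)⁻¹ := FreeGroup.lift_apply_of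

theorem sg_mk (l : List (α × Bool)) :
    sg (FreeGroup.mk l) = FreeGroup.mk (l.map fun g => (g.1, !g.2)) := by
  induction l with
  | nil =>
    show sg (FreeGroup.mk []) = FreeGroup.mk []
    rw [← FreeGroup.one_eq_mk]
    exact _root_.map_one sg
  | cons p t ih =>
    obtain ⟨a, b⟩ := p
    have h1 : FreeGroup.mk ((a, b) :: t) = FreeGroup.mk [(a, b)] * FreeGroup.mk t := by
      rw [FreeGroup.mul_mk]; rfl
    have h2 : FreeGroup.mk ((a, !b) :: (t.map fun g => (g.1, !g.2))) =
        FreeGroup.mk [(a, !b)] * FreeGroup.mk (t.map fun g => (g.1, !g.2)) := by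
      rw [FreeGroup.mul_mk]; rfl
    show sg (FreeGroup.mk ((a, b) :: t)) = FreeGroup.mk ((a, !b) :: (t.map fun g => (g.1, !g.2)))
    rw [h1, _root_.map_mul, ih, h2]
    congr 1
    have hof : ∀ c : α, FreeGroup.of c = FreeGroup.mk [(c, true)] := fun _ => rfl
    cases b
    · show sg (FreeGroup.mk [(a, false)]) = FreeGroup.mk [(a, true)]
      have : FreeGroup.mk [(a, false)] = (FreeGroup.of a)⁻¹ := by
        rw [hof, FreeGroup.inv_mk]; rfl
      rw [this, _root_.map_inv, sg_of, inv_inv, hof]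
    · show sg (FreeGroup.mk [(a, true)]) = FreeGroup.mk [(a, false)]
      rw [← hof, sg_of, hof, FreeGroup.inv_mk]; rfl

theorem toWord_sg (w : FreeGroup α) :
    (sg w).toWord = w.toWord.map fun g => (g.1, !g.2) := by
  conv_lhs => rw [← FreeGroup.mk_toWord (x := w)]
  rw [sg_mk, FreeGroup.toWord_mk]
  apply reduce_eq_self
  show List.IsChain Rn _
  rw [List.isChain_map]
  apply (chain'_toWord w).imp
  intro p q hpq
  simp only [Rn, Bool.not_not] at hpq ⊢
  exact fun ⟨h1, h2⟩ => hpq ⟨h1, by simpa using h2⟩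

theorem palindrome_iff (w : FreeGroup α) : IsPalindrome w ↔ sg w = w⁻¹ := by
  rw [← FreeGroup.toWord_inj, toWord_sg, FreeGroup.toWord_inv, FreeGroup.invRev]
  unfold IsPalindrome
  constructor
  · intro h
    rw [← List.map_reverse, h]
  · intro h
    have h2 : (w.toWord.reverse.map fun g : α × Bool => (g.1, !g.2)) =
        w.toWord.map fun g : α × Bool => (g.1, !g.2) := by
      rw [List.map_reverse, ← h]
    have := congrArg (List.map fun g : α × Bool => (g.1, !g.2)) h2
    simpa [List.map_map, Function.comp_def] using this

/-! ### Retraction to `FreeGroup Bool` and primitivity -/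

variable {X : Type*} [DecidableEq X]

/-- The inclusion `F(x,y) → F(X)`. -/
def io (x y : X) : FreeGroup Bool →* FreeGroup X :=
  FreeGroup.lift fun b : Bool => if b then FreeGroup.of y else FreeGroup.of x

/-- The retraction `F(X) → F(x,y)`, killing every generator except `x`, `y`. -/
def pr (x y : X) : FreeGroup X →* FreeGroup Bool :=
  FreeGroup.lift fun t => if t = x then FreeGroup.of false
    else if t = y then FreeGroup.of true else 1

theorem pr_io {x y : X} (hxy : x ≠ y) (w : FreeGroup Bool) : pr x y (io x y w) = w := by
  have : (pr x y).comp (io x y) = MonoidHom.id _ := by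
    apply FreeGroup.ext_hom
    intro b
    cases b <;> simp [pr, io, hxy, hxy.symm]
  calc pr x y (io x y w) = ((pr x y).comp (io x y)) w := rfl
  _ = w := by rw [this]; rfl

theorem pr_of_ne {x y t : X} (htx : t ≠ x) (hty : t ≠ y) : pr x y (FreeGroup.of t) = 1 := by
  simp [pr, htx, hty]

theorem pr_sg {x y : X} (w : FreeGroup X) : pr x y (sg w) = sg (pr x y w) := by
  have : (pr x y).comp sg = sg.comp (pr x y) := by
    apply FreeGroup.ext_hom
    intro t
    show pr x y (sg (FreeGroup.of t)) = sg (pr x y (FreeGroup.of t))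
    rw [sg_of, _root_.map_inv]
    have hp : pr x y (FreeGroup.of t) = if t = x then FreeGroup.of false
        else if t = y then FreeGroup.of true else 1 := FreeGroup.lift_apply_of
    rw [hp]
    split_ifs <;> simp [sg_of]
  calc pr x y (sg w) = ((pr x y).comp sg) w := rfl
  _ = sg (pr x y w) := by rw [this]; rfl

theorem pr_pal {x y : X} {p : FreeGroup X} (h : IsPalindrome p) : IsPalindrome (pr x y p) := by
  rw [palindrome_iff] at h ⊢
  rw [← pr_sg, h, _root_.map_inv]

/-- Transfer of the non-product property along the retraction. -/
theorem transfer {x y z : X} (hxz : x ≠ z) (hyz : y ≠ z) (hxy : x ≠ y) {k : ℕ}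
    {w : FreeGroup Bool}
    (hnp : ¬ IsProductOfAtMost {p : FreeGroup Bool | IsPalindrome p} k w) :
    ¬ IsProductOfAtMost {p : FreeGroup X | IsPalindrome p} k
      (FreeGroup.of z * io x y w) := by
  rintro ⟨l, hlen, hmem, he⟩
  refine hnp ⟨l.map (pr x y), by simpa using hlen, ?_, ?_⟩
  · intro q hq
    obtain ⟨p, hp, rfl⟩ := List.mem_map.mp hq
    exact pr_pal (hmem p hp)
  · rw [← map_list_prod, he, _root_.map_mul,
      pr_of_ne hxz.symm hyz.symm, one_mul, pr_io hxy]

theorem primitive_mul {x y z : X} (hxz : x ≠ z) (hyz : y ≠ z) (w : FreeGroup Bool) :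
    IsPrimitive (FreeGroup.of z * io x y w) := by
  set u : FreeGroup X := io x y w with hu
  let ph : FreeGroup X →* FreeGroup X :=
    FreeGroup.lift fun t => if t = z then FreeGroup.of z * u else FreeGroup.of t
  let qh : FreeGroup X →* FreeGroup X :=
    FreeGroup.lift fun t => if t = z then FreeGroup.of z * u⁻¹ else FreeGroup.of t
  have hph_of : ∀ t, ph (FreeGroup.of t) =
      if t = z then FreeGroup.of z * u else FreeGroup.of t := fun t => FreeGroup.lift_apply_of
  have hqh_of : ∀ t, qh (FreeGroup.of t) =
      if t = z then FreeGroup.of z * u⁻¹ else FreeGroup.of t := fun t => FreeGroup.lift_apply_of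
  have hph_io : ph u = u := by
    have : ph.comp (io x y) = io x y := by
      apply FreeGroup.ext_hom
      intro b
      cases b <;>
        simp [io, hph_of, hxz, hyz]
    calc ph u = (ph.comp (io x y)) w := rfl
    _ = u := by rw [this]
  have hqh_io : qh u = u := by
    have : qh.comp (io x y) = io x y := by
      apply FreeGroup.ext_hom
      intro b
      cases b <;>
        simp [io, hqh_of, hxz, hyz]
    calc qh u = (qh.comp (io x y)) w := rfl
    _ = u := by rw [this]
  have h1 : qh.comp ph = MonoidHom.id _ := by
    apply FreeGroup.ext_hom
    intro t
    show qh (ph (FreeGroup.of t)) = FreeGroup.of t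
    rw [hph_of]
    split_ifs with ht
    · subst ht
      rw [_root_.map_mul, hqh_of, if_pos rfl]
      have : qh u = u := hqh_io
      rw [this, mul_assoc, inv_mul_cancel, mul_one]
    · rw [hqh_of, if_neg ht]
  have h2 : ph.comp qh = MonoidHom.id _ := by
    apply FreeGroup.ext_hom
    intro t
    show ph (qh (FreeGroup.of t)) = FreeGroup.of t
    rw [hqh_of]
    split_ifs with ht
    · subst ht
      rw [_root_.map_mul, _root_.map_inv, hph_of, if_pos rfl, hph_io,
        mul_assoc, mul_inv_cancel, mul_one]
    · rw [hph_of, if_neg ht]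
  refine ⟨MonoidHom.toMulEquiv ph qh h1 h2, z, ?_⟩
  show ph (FreeGroup.of z) = FreeGroup.of z * u
  rw [hph_of, if_pos rfl]

end PalAux

/-- in a free group of rank > 2 the palindromic length of primitive
elements is unbounded; concretely, for distinct basis letters x, y, z, if a word w in
x, y is not a product of k palindromes of F(x,y) then z·w is a primitive element that
is not a product of k palindromes. -/
theorem primitive_palindromic_length_unbounded {X : Type*} [DecidableEq X]
    (x y z : X) (hxy : x ≠ y) (hxz : x ≠ z) (hyz : y ≠ z) :
    (∀ k : ℕ, ∃ w : FreeGroup X, IsPrimitive w ∧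
      ¬ IsProductOfAtMost {p : FreeGroup X | IsPalindrome p} k w) ∧
    (∀ (k : ℕ) (w : FreeGroup Bool),
      ¬ IsProductOfAtMost {p : FreeGroup Bool | IsPalindrome p} k w →
      IsPrimitive (FreeGroup.of z *
          FreeGroup.lift (fun b : Bool => if b then FreeGroup.of y else FreeGroup.of x) w) ∧
      ¬ IsProductOfAtMost {p : FreeGroup X | IsPalindrome p} k
        (FreeGroup.of z *
          FreeGroup.lift (fun b : Bool => if b then FreeGroup.of y else FreeGroup.of x) w)) := by
  have key : ∀ (k : ℕ) (w : FreeGroup Bool),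
      ¬ IsProductOfAtMost {p : FreeGroup Bool | IsPalindrome p} k w →
      IsPrimitive (FreeGroup.of z * PalAux.io x y w) ∧
      ¬ IsProductOfAtMost {p : FreeGroup X | IsPalindrome p} k
        (FreeGroup.of z * PalAux.io x y w) := by
    intro k w hw
    exact ⟨PalAux.primitive_mul hxz hyz w, PalAux.transfer hxz hyz hxy hw⟩
  constructor
  · intro k
    obtain ⟨h1, h2⟩ := key k (FreeGroup.mk (PalAux.LL (2 * k + 1))) (PalAux.big_word k)
    exact ⟨_, h1, h2⟩
  · exact key
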